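/- arXiv:1111.6091 — 3 statements merged into one kernel-verified Lean document; each statement's English description precedes it below -/
import Mathlib

section
/- The Hadamard product of a symmetric positive definite matrix and a symmetric positive semidefinite matrix with strictly positive diagonal entries is symmetric positive definite. In particular, the Hadamard product of finitely many symmetric positive definite matrices is symmetric positive definite. -/
open BigOperators

lemma schur_key {n : ℕ} (A B : Matrix (Fin n) (Fin n) ℝ) (hA : A.PosDef)
    (hB : B.PosSemidef) (hdiag : ∀ i, 0 < B i i) :
    (Matrix.hadamard A B).PosDef := by
  obtain ⟨C, hC⟩ : ∃ C : Matrix (Fin n) (Fin n) ℝ, B = Matrix.conjTranspose C * C := by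
    open scoped MatrixOrder in
    obtain ⟨C, hC⟩ := CStarAlgebra.nonneg_iff_eq_star_mul_self.mp hB.nonneg
    exact ⟨C, hC⟩
  have hBij : ∀ i j, B i j = ∑ k, C k i * C k j := by
    intro i j
    rw [hC]
    simp [Matrix.mul_apply, Matrix.conjTranspose_apply, mul_comm]
  rw [Matrix.posDef_iff_dotProduct_mulVec]
  constructor
  · have h1 := hA.1
    have h2 := hB.1
    rw [Matrix.IsHermitian] at *
    ext i j
    simp only [Matrix.conjTranspose_apply, Matrix.hadamard_apply, star_mul', RCLike.star_def,
      Matrix.hadamard_apply]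
    have := congrFun (congrFun h1 i) j
    have := congrFun (congrFun h2 i) j
    simp only [Matrix.conjTranspose_apply] at *
    simp_all
  · intro x hx
    have key : dotProduct (star x) ((Matrix.hadamard A B).mulVec x) =
        ∑ k, dotProduct (star (fun i => C k i * x i)) (A.mulVec (fun i => C k i * x i)) := by
      have e1 : dotProduct (star x) ((Matrix.hadamard A B).mulVec x) =
          ∑ i, ∑ j, ∑ k, (C k i * x i) * A i j * (C k j * x j) := by
        simp only [dotProduct, Matrix.mulVec, Matrix.hadamard_apply, star_trivial,
          Pi.star_apply, Finset.mul_sum]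
        refine Finset.sum_congr rfl fun i _ => Finset.sum_congr rfl fun j _ => ?_
        rw [hBij i j]
        simp only [Finset.mul_sum, Finset.sum_mul]
        exact Finset.sum_congr rfl fun k _ => by ring
      have e2 : (∑ k, dotProduct (star (fun i => C k i * x i))
            (A.mulVec (fun i => C k i * x i))) =
          ∑ k, ∑ i, ∑ j, (C k i * x i) * A i j * (C k j * x j) := by
        refine Finset.sum_congr rfl fun k _ => ?_
        simp only [dotProduct, Matrix.mulVec, star_trivial, Pi.star_apply, Finset.mul_sum]
        refine Finset.sum_congr rfl fun i _ => Finset.sum_congr rfl fun j _ => ?_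
        ring
      have e3 : (∑ i, ∑ j, ∑ k, (C k i * x i) * A i j * (C k j * x j)) =
          ∑ i, ∑ k, ∑ j, (C k i * x i) * A i j * (C k j * x j) :=
        Finset.sum_congr rfl fun i _ => Finset.sum_comm
      rw [e1, e2, e3, Finset.sum_comm]
    rw [key]
    -- find i₀ with x i₀ ≠ 0, then k with C k i₀ ≠ 0
    obtain ⟨i₀, hi₀⟩ := Function.ne_iff.mp hx
    have hBi : (0:ℝ) < ∑ k, C k i₀ * C k i₀ := by rw [← hBij]; exact hdiag i₀
    have : ∃ k, C k i₀ ≠ 0 := by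
      by_contra h
      push_neg at h
      simp only [h, mul_zero, Finset.sum_const_zero, lt_irrefl] at hBi
    obtain ⟨k₀, hk₀⟩ := this
    apply Finset.sum_pos'
    · intro k _
      exact (hA.posSemidef).dotProduct_mulVec_nonneg _
    · refine ⟨k₀, Finset.mem_univ _, ?_⟩
      apply hA.dotProduct_mulVec_pos
      intro h
      have := congrFun h i₀
      simp only [Pi.zero_apply] at this
      exact hi₀ (by
        rcases mul_eq_zero.mp this with h' | h'
        · exact absurd h' hk₀
        · exact h')

lemma posDef_diag_pos {n : ℕ} {B : Matrix (Fin n) (Fin n) ℝ} (hB : B.PosDef) (i : Fin n) :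
    0 < B i i := by
  have := hB.dotProduct_mulVec_pos (x := Pi.single i 1) (by simp [Function.ne_iff])
  simpa [dotProduct, Matrix.mulVec, Pi.single_apply] using this

/-- The Hadamard product of a symmetric positive definite matrix and a symmetric
positive semidefinite matrix with strictly positive diagonal entries is symmetric
positive definite; in particular, the Hadamard product of finitely many (at least
one) symmetric positive definite matrices is symmetric positive definite. -/
theorem hadamard_posDef {n : ℕ} :
    (∀ A B : Matrix (Fin n) (Fin n) ℝ, A.PosDef → B.PosSemidef →
      (∀ i, 0 < B i i) → (Matrix.hadamard A B).PosDef) ∧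
    (∀ (K : ℕ) (M : Fin (K + 1) → Matrix (Fin n) (Fin n) ℝ),
      (∀ k, (M k).PosDef) →
      (Matrix.of fun i j => ∏ k, M k i j).PosDef) := by
  refine ⟨schur_key, ?_⟩
  intro K
  induction K with
  | zero =>
    intro M hM
    have : (Matrix.of fun i j => ∏ k, M k i j) = M 0 := by
      ext i j; simp
    rw [this]; exact hM 0
  | succ K ih =>
    intro M hM
    have : (Matrix.of fun i j => ∏ k, M k i j) =
        Matrix.hadamard (M 0) (Matrix.of fun i j => ∏ k, M (Fin.succ k) i j) := by
      ext i j
      simp [Matrix.hadamard_apply, Fin.prod_univ_succ]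
    rw [this]
    have hrest := ih (fun k => M (Fin.succ k)) (fun k => hM _)
    exact schur_key _ _ (hM 0) hrest.posSemidef (fun i => posDef_diag_pos hrest i)
end

section
/- Gauss–Seidel convergence for consistent semidefinite systems (Keller): let Γ ∈ ℝ^{R×R} be symmetric positive semidefinite with strictly positive diagonal entries, and let b ∈ ℝ^R lie in the column space of Γ. Then the Gauss–Seidel iteration x_{k+1} = x_k + D_L^{-1}(b − Γ x_k), where D_L is the lower triangular part of Γ (including the diagonal), converges to a solution of Γ x = b. -/
open Matrix

lemma GS.swap {R : ℕ} (Γ : Matrix (Fin R) (Fin R) ℝ)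
    (hsymm : ∀ i j, Γ i j = Γ j i) (a c : Fin R → ℝ) :
    a ⬝ᵥ Γ.mulVec c = c ⬝ᵥ Γ.mulVec a := by
  simp only [dotProduct, mulVec, Finset.mul_sum]
  rw [Finset.sum_comm]
  refine Finset.sum_congr rfl fun j _ => Finset.sum_congr rfl fun i _ => ?_
  rw [hsymm i j]; ring

lemma GS.N_nonneg {R : ℕ} (v : Fin R → ℝ) : 0 ≤ v ⬝ᵥ v :=
  Finset.sum_nonneg fun _ _ => mul_self_nonneg _

lemma GS.N_pos {R : ℕ} {v : Fin R → ℝ} (hv : v ≠ 0) : 0 < v ⬝ᵥ v := by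
  rcases lt_or_eq_of_le (GS.N_nonneg v) with h | h
  · exact h
  · exact absurd (dotProduct_self_eq_zero.mp h.symm) hv

lemma GS.decomp {R : ℕ} (Γ : Matrix (Fin R) (Fin R) ℝ) (hΓ : Γ.PosSemidef) (e : Fin R → ℝ) :
    ∃ w, (∃ u, Γ.mulVec u = w) ∧ Γ.mulVec (e - w) = 0 := by
  have hsymm : ∀ i j, Γ i j = Γ j i := by
    intro i j
    conv_lhs => rw [← hΓ.1]
    simp [conjTranspose_apply]
  set W := LinearMap.range Γ.mulVecLin with hW
  set K := LinearMap.ker Γ.mulVecLin with hK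
  have hdisj : Disjoint W K := by
    rw [Submodule.disjoint_def]
    intro v hvW hvK
    obtain ⟨u, hu⟩ := hvW
    have hker : Γ.mulVec v = 0 := hvK
    have hu' : Γ.mulVec u = v := hu
    have hvv : v ⬝ᵥ v = 0 := by
      calc v ⬝ᵥ v = v ⬝ᵥ Γ.mulVec u := by rw [hu']
        _ = u ⬝ᵥ Γ.mulVec v := GS.swap Γ hsymm v u
        _ = 0 := by rw [hker, dotProduct_zero]
    exact dotProduct_self_eq_zero.mp hvv
  have htop : W ⊔ K = ⊤ := by
    apply Submodule.eq_top_of_disjoint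
    · rw [LinearMap.finrank_range_add_finrank_ker]
    · exact hdisj
  have he : e ∈ W ⊔ K := htop ▸ Submodule.mem_top
  obtain ⟨w, hw, z, hz, hwz⟩ := Submodule.mem_sup.mp he
  refine ⟨w, hw, ?_⟩
  have hez : e - w = z := by rw [← hwz]; abel
  rw [hez]
  exact hz

lemma GS.coercive {R : ℕ} (Γ : Matrix (Fin R) (Fin R) ℝ) (hΓ : Γ.PosSemidef) :
    ∃ c > (0:ℝ), ∀ w : Fin R → ℝ, (∃ u, Γ.mulVec u = w) →
      c * (w ⬝ᵥ w) ≤ w ⬝ᵥ Γ.mulVec w := by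
  have hsymm : ∀ i j, Γ i j = Γ j i := by
    intro i j
    conv_lhs => rw [← hΓ.1]
    simp [conjTranspose_apply]
  set W := LinearMap.range Γ.mulVecLin with hW
  have hnorm : ∀ w : Fin R → ℝ, w ∈ W → w ≠ 0 → ∃ w' : Fin R → ℝ,
      (w' ∈ W ∧ w' ⬝ᵥ w' = 1) ∧
      w ⬝ᵥ Γ.mulVec w = (w ⬝ᵥ w) * (w' ⬝ᵥ Γ.mulVec w') := by
    intro w hwW hw0
    have hNw : 0 < w ⬝ᵥ w := GS.N_pos hw0
    set t := Real.sqrt (w ⬝ᵥ w) with ht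
    have htpos : 0 < t := Real.sqrt_pos.mpr hNw
    have htt : t * t = w ⬝ᵥ w := Real.mul_self_sqrt hNw.le
    refine ⟨t⁻¹ • w, ⟨W.smul_mem _ hwW, ?_⟩, ?_⟩
    · rw [smul_dotProduct, dotProduct_smul, smul_eq_mul, smul_eq_mul, ← mul_assoc]
      field_simp
      linarith [htt]
    · rw [mulVec_smul, smul_dotProduct, dotProduct_smul, smul_eq_mul, smul_eq_mul,
        ← mul_assoc, ← mul_assoc]
      field_simp
      rw [← htt]; ring
  by_cases hWtriv : ∀ w ∈ W, w = (0 : Fin R → ℝ)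
  · refine ⟨1, one_pos, fun w hwW => ?_⟩
    rw [hWtriv w (by obtain ⟨u, hu⟩ := hwW; exact ⟨u, hu⟩)]
    simp
  · push_neg at hWtriv
    obtain ⟨w1, hw1W, hw1⟩ := hWtriv
    set S : Set (Fin R → ℝ) := {w | w ∈ W ∧ w ⬝ᵥ w = 1} with hS
    have hSne : S.Nonempty := by
      obtain ⟨w', hw', _⟩ := hnorm w1 hw1W hw1
      exact ⟨w', hw'⟩
    have hNcont : Continuous fun v : Fin R → ℝ => v ⬝ᵥ v := by
      simp only [dotProduct]
      exact continuous_finset_sum _ fun i _ => (continuous_apply i).mul (continuous_apply i)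
    have hFcont : Continuous fun v : Fin R → ℝ => v ⬝ᵥ Γ.mulVec v := by
      simp only [dotProduct, mulVec]
      exact continuous_finset_sum _ fun i _ => (continuous_apply i).mul
        (continuous_finset_sum _ fun j _ => continuous_const.mul (continuous_apply j))
    have hScompact : IsCompact S := by
      apply Metric.isCompact_of_isClosed_isBounded
      · exact (Submodule.closed_of_finiteDimensional W).inter (isClosed_eq hNcont continuous_const)
      · rw [Metric.isBounded_iff_subset_closedBall 0]
        refine ⟨1, fun w hw => ?_⟩
        rw [Metric.mem_closedBall, dist_zero_right]
        rw [pi_norm_le_iff_of_nonneg zero_le_one]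
        intro i
        have h1 : w i * w i ≤ w ⬝ᵥ w :=
          Finset.single_le_sum (fun j _ => mul_self_nonneg (w j)) (Finset.mem_univ i)
        rw [hw.2] at h1
        rw [Real.norm_eq_abs, ← Real.sqrt_one, ← Real.sqrt_sq_eq_abs]
        exact Real.sqrt_le_sqrt (by rw [sq]; exact h1)
    obtain ⟨w0, hw0S, hw0min⟩ := hScompact.exists_isMinOn hSne hFcont.continuousOn
    set c := w0 ⬝ᵥ Γ.mulVec w0 with hc
    have hcpos : 0 < c := by
      rcases lt_or_eq_of_le (by simpa using hΓ.dotProduct_mulVec_nonneg w0) with h | h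
      · exact h
      · exfalso
        have hzero : Γ.mulVec w0 = 0 := by
          rw [← hΓ.dotProduct_mulVec_zero_iff]; simpa using h.symm
        obtain ⟨u, hu⟩ := hw0S.1
        have hu' : Γ.mulVec u = w0 := hu
        have hzz : w0 ⬝ᵥ w0 = 0 := by
          calc w0 ⬝ᵥ w0 = w0 ⬝ᵥ Γ.mulVec u := by rw [hu']
            _ = u ⬝ᵥ Γ.mulVec w0 := GS.swap Γ hsymm w0 u
            _ = 0 := by rw [hzero, dotProduct_zero]
        rw [hw0S.2] at hzz; norm_num at hzz
    refine ⟨c, hcpos, fun w hwW => ?_⟩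
    have hwW' : w ∈ W := by obtain ⟨u, hu⟩ := hwW; exact ⟨u, hu⟩
    by_cases hw0' : w = 0
    · subst hw0'; simp
    · obtain ⟨w', ⟨hw'W, hw'N⟩, hw'E⟩ := hnorm w hwW' hw0'
      have hmin : c ≤ w' ⬝ᵥ Γ.mulVec w' := hw0min ⟨hw'W, hw'N⟩
      rw [hw'E]
      have hNw : 0 < w ⬝ᵥ w := GS.N_pos hw0'
      calc c * (w ⬝ᵥ w) = (w ⬝ᵥ w) * c := by ring
        _ ≤ (w ⬝ᵥ w) * (w' ⬝ᵥ Γ.mulVec w') := mul_le_mul_of_nonneg_left hmin hNw.le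


/-- Gauss–Seidel convergence for consistent semidefinite systems (Keller): if
`Γ` is symmetric positive semidefinite with strictly positive diagonal and `b`
lies in the column space of `Γ`, then the Gauss–Seidel iteration
`x_{k+1} = x_k + D_L⁻¹(b − Γ x_k)`, with `D_L` the lower triangular part of `Γ`
(including the diagonal), converges to a solution of `Γ x = b`. -/
theorem gauss_seidel_semidef_converges {R : ℕ}
    (Γ : Matrix (Fin R) (Fin R) ℝ) (hΓ : Γ.PosSemidef)
    (hdiag : ∀ i, 0 < Γ i i)
    (b : Fin R → ℝ) (hb : ∃ y, Γ.mulVec y = b)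
    (x : ℕ → Fin R → ℝ)
    (hx : ∀ k, x (k + 1) =
      x k + (Matrix.of fun i j : Fin R => if j ≤ i then Γ i j else 0)⁻¹.mulVec
        (b - Γ.mulVec (x k))) :
    ∃ xlim : Fin R → ℝ,
      Filter.Tendsto x Filter.atTop (nhds xlim) ∧ Γ.mulVec xlim = b := by
  rcases Nat.eq_zero_or_pos R with hR | hR
  · subst hR
    refine ⟨x 0, ?_, Subsingleton.elim _ _⟩
    have : x = fun _ => x 0 := funext fun n => Subsingleton.elim _ _
    rw [this]; exact tendsto_const_nhds
  haveI : Nonempty (Fin R) := ⟨⟨0, hR⟩⟩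
  have hsymm : ∀ i j, Γ i j = Γ j i := by
    intro i j
    conv_lhs => rw [← hΓ.1]
    simp [conjTranspose_apply]
  set L : Matrix (Fin R) (Fin R) ℝ :=
    Matrix.of fun i j : Fin R => if j ≤ i then Γ i j else 0 with hLdef
  -- L is invertible
  have hLdet : IsUnit L.det := by
    have htri : Lᵀ.BlockTriangular id := by
      intro i j hij
      simp only [transpose_apply, hLdef, Matrix.of_apply]
      have : ¬ i ≤ j := not_le.mpr hij
      rw [if_neg this]
    have hdet : L.det = ∏ i, Γ i i := by
      rw [← det_transpose, Matrix.det_of_upperTriangular htri]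
      exact Finset.prod_congr rfl fun i _ => by simp [hLdef]
    rw [hdet]
    exact IsUnit.mk0 _ (ne_of_gt (Finset.prod_pos fun i _ => hdiag i))
  have hLinv : ∀ v : Fin R → ℝ, L.mulVec (L⁻¹.mulVec v) = v := by
    intro v
    rw [mulVec_mulVec, mul_nonsing_inv _ hLdet, one_mulVec]
  obtain ⟨xs, hxs⟩ := hb
  set e : ℕ → Fin R → ℝ := fun k => x k - xs with he
  set d : ℕ → Fin R → ℝ := fun k => L⁻¹.mulVec (Γ.mulVec (e k)) with hd
  have hxd : ∀ k, x (k + 1) = x k - d k := by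
    intro k
    have hb' : b - Γ.mulVec (x k) = -(Γ.mulVec (e k)) := by
      rw [he, ← hxs]
      simp only [mulVec_sub]
      abel
    rw [hx k, hb', mulVec_neg]
    show x k + -(d k) = x k - d k
    abel
  have hed : ∀ k, e (k + 1) = e k - d k := by
    intro k
    rw [he]
    simp only
    rw [hxd k]
    abel
  have hLd : ∀ k, L.mulVec (d k) = Γ.mulVec (e k) := fun k => hLinv _
  -- the energy function
  set F : (Fin R → ℝ) → ℝ := fun v => v ⬝ᵥ Γ.mulVec v with hF
  have hFnn : ∀ v, 0 ≤ F v := fun v => by simpa using hΓ.dotProduct_mulVec_nonneg v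
  -- matrix identity Γ = L + Lᵀ - diag
  have hGL : Γ = L + Lᵀ - Matrix.diagonal (fun i => Γ i i) := by
    ext i j
    simp only [Matrix.sub_apply, Matrix.add_apply, transpose_apply, hLdef, Matrix.of_apply,
      Matrix.diagonal_apply]
    rcases lt_trichotomy i j with h | h | h
    · rw [if_neg (not_le.mpr h), if_pos h.le, if_neg (Fin.ne_of_lt h), hsymm i j]; ring
    · subst h; simp
    · rw [if_pos h.le, if_neg (not_le.mpr h), if_neg (Fin.ne_of_gt h)]; ring
  -- quadratic form of Γ in terms of L
  have hLq : ∀ u : Fin R → ℝ,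
      u ⬝ᵥ Γ.mulVec u = 2 * (u ⬝ᵥ L.mulVec u) - ∑ i, Γ i i * u i ^ 2 := by
    intro u
    conv_lhs => rw [hGL]
    rw [sub_mulVec, add_mulVec, dotProduct_sub, dotProduct_add]
    have h1 : u ⬝ᵥ Lᵀ.mulVec u = u ⬝ᵥ L.mulVec u := by
      rw [mulVec_transpose, dotProduct_comm, ← dotProduct_mulVec]
    have h2 : u ⬝ᵥ (Matrix.diagonal fun i => Γ i i).mulVec u = ∑ i, Γ i i * u i ^ 2 := by
      simp only [dotProduct, mulVec_diagonal]
      exact Finset.sum_congr rfl fun i _ => by ring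
    rw [h1, h2]; ring
  -- energy decrease identity
  have hstep : ∀ k, F (e (k + 1)) = F (e k) - ∑ i, Γ i i * d k i ^ 2 := by
    intro k
    rw [hed k, hF]
    simp only
    have hvd : Γ.mulVec (e k) = L.mulVec (d k) := (hLd k).symm
    rw [sub_dotProduct, mulVec_sub, dotProduct_sub, dotProduct_sub]
    have h1 : e k ⬝ᵥ Γ.mulVec (d k) = d k ⬝ᵥ L.mulVec (d k) := by
      rw [GS.swap Γ hsymm (e k) (d k), hvd]
    have h2 : d k ⬝ᵥ Γ.mulVec (e k) = d k ⬝ᵥ L.mulVec (d k) := by rw [hvd]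
    have h3 := hLq (d k)
    rw [h1, h2, h3]; ring
  -- the diagonal lower bound δ
  set δ : ℝ := Finset.univ.inf' Finset.univ_nonempty (fun i => Γ i i) with hδ
  have hδpos : 0 < δ := by
    rw [hδ, Finset.lt_inf'_iff]
    exact fun i _ => hdiag i
  have hδle : ∀ i, δ ≤ Γ i i := fun i => Finset.inf'_le _ (Finset.mem_univ i)
  have hsumdiag : ∀ u : Fin R → ℝ, δ * (u ⬝ᵥ u) ≤ ∑ i, Γ i i * u i ^ 2 := by
    intro u
    rw [dotProduct, Finset.mul_sum]
    refine Finset.sum_le_sum fun i _ => ?_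
    have : u i * u i = u i ^ 2 := (sq _).symm
    rw [this]
    exact mul_le_mul_of_nonneg_right (hδle i) (sq_nonneg _)
  have hsum_le : ∀ k, ∑ i, Γ i i * d k i ^ 2 ≤ F (e k) := by
    intro k
    have h := hstep k
    have h2 := hFnn (e (k + 1))
    linarith
  -- the Frobenius bound CL
  set CL : ℝ := ∑ i, ∑ j, (L i j) ^ 2 with hCL
  have hCLpos : 0 < CL := by
    rw [hCL]
    refine Finset.sum_pos' (fun i _ => Finset.sum_nonneg fun j _ => sq_nonneg _) ?_
    refine ⟨⟨0, hR⟩, Finset.mem_univ _, ?_⟩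
    refine Finset.sum_pos' (fun j _ => sq_nonneg _) ⟨⟨0, hR⟩, Finset.mem_univ _, ?_⟩
    have : L ⟨0, hR⟩ ⟨0, hR⟩ = Γ ⟨0, hR⟩ ⟨0, hR⟩ := by simp [hLdef]
    rw [this]
    exact pow_pos (hdiag _) 2
  have hLop : ∀ u : Fin R → ℝ, (L.mulVec u) ⬝ᵥ (L.mulVec u) ≤ CL * (u ⬝ᵥ u) := by
    intro u
    have hNu : u ⬝ᵥ u = ∑ j, u j ^ 2 := Finset.sum_congr rfl fun j _ => (sq _).symm
    rw [hNu, hCL, Finset.sum_mul, dotProduct]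
    refine Finset.sum_le_sum fun i _ => ?_
    have hcs := Finset.sum_mul_sq_le_sq_mul_sq Finset.univ (fun j => L i j) u
    calc L.mulVec u i * L.mulVec u i = (∑ j, L i j * u j) ^ 2 := by
          rw [← sq]; congr 1
      _ ≤ (∑ j, L i j ^ 2) * ∑ j, u j ^ 2 := hcs
  -- coercivity constant
  obtain ⟨c, hcpos, hcoer⟩ := GS.coercive Γ hΓ
  set ρ : ℝ := max (1 - δ * c / CL) 0 with hρ
  have hρ0 : 0 ≤ ρ := le_max_right _ _
  have hρ1 : ρ < 1 := by
    apply max_lt _ one_pos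
    have : 0 < δ * c / CL := by positivity
    linarith
  -- the key per-step decay
  have hFstep : ∀ k, F (e (k + 1)) ≤ ρ * F (e k) := by
    intro k
    obtain ⟨w, hwrange, hwz⟩ := GS.decomp Γ hΓ (e k)
    have hGe : Γ.mulVec (e k) = Γ.mulVec w := by
      rw [mulVec_sub] at hwz
      exact sub_eq_zero.mp hwz
    have hFew : F (e k) = w ⬝ᵥ Γ.mulVec w := by
      rw [hF]
      simp only
      rw [hGe, GS.swap Γ hsymm (e k) w, hGe]
    rcases eq_or_lt_of_le (hFnn (e k)) with hzero | hpos
    · have h := hstep k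
      have h2 := hsumdiag (d k)
      have h3 := GS.N_nonneg (d k)
      have h4 := hFnn (e (k + 1))
      nlinarith [hρ0]
    · have hFw_eq : w ⬝ᵥ Γ.mulVec w = w ⬝ᵥ L.mulVec (d k) := by
        rw [hLd k, hGe]
      -- Cauchy–Schwarz
      have hCS : (F (e k)) ^ 2 ≤ (w ⬝ᵥ w) * ((L.mulVec (d k)) ⬝ᵥ (L.mulVec (d k))) := by
        rw [hFew, hFw_eq]
        have hcs := Finset.sum_mul_sq_le_sq_mul_sq Finset.univ w (L.mulVec (d k))
        simp only [dotProduct]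
        calc (∑ i, w i * L.mulVec (d k) i) ^ 2
            ≤ (∑ i, w i ^ 2) * ∑ i, (L.mulVec (d k) i) ^ 2 := hcs
          _ = (∑ i, w i * w i) * ∑ i, L.mulVec (d k) i * L.mulVec (d k) i := by
              simp only [sq]
      have hcw : c * (w ⬝ᵥ w) ≤ w ⬝ᵥ Γ.mulVec w := hcoer w hwrange
      have hLdb := hLop (d k)
      have hNw := GS.N_nonneg w
      have hNLd := GS.N_nonneg (L.mulVec (d k))
      have hNd := GS.N_nonneg (d k)
      -- derive c * F ≤ CL * (d ⬝ᵥ d)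
      have hkey : c * F (e k) ≤ CL * (d k ⬝ᵥ d k) := by
        have h1 : c * (F (e k)) ^ 2 ≤ (F (e k)) * (CL * (d k ⬝ᵥ d k)) := by
          calc c * (F (e k)) ^ 2
              ≤ c * ((w ⬝ᵥ w) * ((L.mulVec (d k)) ⬝ᵥ (L.mulVec (d k)))) :=
                mul_le_mul_of_nonneg_left hCS hcpos.le
            _ = (c * (w ⬝ᵥ w)) * ((L.mulVec (d k)) ⬝ᵥ (L.mulVec (d k))) := by ring
            _ ≤ (F (e k)) * ((L.mulVec (d k)) ⬝ᵥ (L.mulVec (d k))) := by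
                rw [hFew]
                exact mul_le_mul_of_nonneg_right hcw hNLd
            _ ≤ (F (e k)) * (CL * (d k ⬝ᵥ d k)) :=
                mul_le_mul_of_nonneg_left hLdb (by rw [← hFew] at *; exact hpos.le)
        nlinarith [hpos]
      have h5 : δ * c / CL * F (e k) ≤ δ * (d k ⬝ᵥ d k) := by
        rw [div_mul_eq_mul_div, div_le_iff₀ hCLpos]
        nlinarith [hδpos]
      have h6 := hsumdiag (d k)
      have h7 := hstep k
      have h8 : (1 - δ * c / CL) ≤ ρ := le_max_left _ _
      have h9 : (1 - δ * c / CL) * F (e k) ≤ ρ * F (e k) :=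
        mul_le_mul_of_nonneg_right h8 hpos.le
      linarith
  -- geometric decay of the energy
  have hgeo : ∀ k, F (e k) ≤ ρ ^ k * F (e 0) := by
    intro k
    induction k with
    | zero => simp
    | succ n ih =>
      calc F (e (n + 1)) ≤ ρ * F (e n) := hFstep n
        _ ≤ ρ * (ρ ^ n * F (e 0)) := mul_le_mul_of_nonneg_left ih hρ0
        _ = ρ ^ (n + 1) * F (e 0) := by ring
  have hd2 : ∀ k, d k ⬝ᵥ d k ≤ ρ ^ k * (F (e 0) / δ) := by
    intro k
    have h1 := hsumdiag (d k)
    have h2 := hsum_le k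
    have h3 := hgeo k
    have h4 : δ * (d k ⬝ᵥ d k) ≤ ρ ^ k * F (e 0) := by linarith
    rw [← mul_div_assoc, le_div_iff₀ hδpos]
    linarith
  -- Cauchy sequence via geometric bound
  set C : ℝ := Real.sqrt (F (e 0) / δ) with hC
  set r : ℝ := Real.sqrt ρ with hr
  have hr0 : 0 ≤ r := Real.sqrt_nonneg _
  have hr1 : r < 1 := by
    nlinarith [Real.sq_sqrt hρ0, Real.sqrt_nonneg ρ]
  have hC0 : 0 ≤ C := Real.sqrt_nonneg _
  have hCr2 : ∀ k, (C * r ^ k) ^ 2 = ρ ^ k * (F (e 0) / δ) := by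
    intro k
    have h1 : C ^ 2 = F (e 0) / δ := Real.sq_sqrt (div_nonneg (hFnn (e 0)) hδpos.le)
    have h2 : r ^ 2 = ρ := Real.sq_sqrt hρ0
    calc (C * r ^ k) ^ 2 = C ^ 2 * (r ^ 2) ^ k := by ring
      _ = ρ ^ k * (F (e 0) / δ) := by rw [h1, h2]; ring
  have hdnorm : ∀ k, ‖d k‖ ≤ C * r ^ k := by
    intro k
    rw [pi_norm_le_iff_of_nonneg (by positivity)]
    intro i
    rw [Real.norm_eq_abs, ← Real.sqrt_sq_eq_abs]
    have h1 : (d k i) ^ 2 ≤ d k ⬝ᵥ d k := by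
      rw [sq, dotProduct]
      exact Finset.single_le_sum (fun j _ => mul_self_nonneg (d k j)) (Finset.mem_univ i)
    calc Real.sqrt ((d k i) ^ 2) ≤ Real.sqrt ((C * r ^ k) ^ 2) := by
          apply Real.sqrt_le_sqrt
          rw [hCr2 k]
          exact h1.trans (hd2 k)
      _ = C * r ^ k := Real.sqrt_sq (by positivity)
  have hdist : ∀ k, dist (x k) (x (k + 1)) ≤ C * r ^ k := by
    intro k
    rw [dist_eq_norm]
    have hxx : x k - x (k + 1) = d k := by rw [hxd k, sub_sub_cancel]
    rw [hxx]
    exact hdnorm k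
  have hcauchy : CauchySeq x := cauchySeq_of_le_geometric r C hr1 hdist
  obtain ⟨xlim, hxlim⟩ := cauchySeq_tendsto_of_complete hcauchy
  refine ⟨xlim, hxlim, ?_⟩
  -- d k → 0
  have hdlim : Filter.Tendsto d Filter.atTop (nhds 0) := by
    apply squeeze_zero_norm hdnorm
    have ht := (tendsto_pow_atTop_nhds_zero_of_lt_one hr0 hr1).const_mul C
    rw [mul_zero] at ht
    exact ht
  -- Γ x k = b + L d k
  have hGx : (fun k => Γ.mulVec (x k)) = fun k => b + L.mulVec (d k) := by
    funext k
    have hxk : x k = e k + xs := by rw [he]; simp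
    rw [hxk, mulVec_add, hxs, ← hLd k]
    abel
  have hmvcont : ∀ M : Matrix (Fin R) (Fin R) ℝ, Continuous (fun v : Fin R → ℝ => M.mulVec v) := by
    intro M
    unfold mulVec dotProduct
    exact continuous_pi fun i => continuous_finset_sum _ fun j _ =>
      continuous_const.mul (continuous_apply j)
  have h1 : Filter.Tendsto (fun k => Γ.mulVec (x k)) Filter.atTop (nhds (Γ.mulVec xlim)) :=
    ((hmvcont Γ).tendsto xlim).comp hxlim
  have h2 : Filter.Tendsto (fun k => b + L.mulVec (d k)) Filter.atTop (nhds (b + 0)) := by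
    apply Filter.Tendsto.const_add
    have h2' : Filter.Tendsto (fun k => L.mulVec (d k)) Filter.atTop (nhds (L.mulVec 0)) :=
      ((hmvcont L).tendsto 0).comp hdlim
    rwa [mulVec_zero] at h2'
  rw [hGx] at h1
  have := tendsto_nhds_unique h1 h2
  rw [this, add_zero]
end

section
/- The gradient of the CP objective: for a tensor Z ∈ ℝ^{I_1×⋯×I_N} and factor matrices A^{(n)} ∈ ℝ^{I_n×R}, the partial derivative of f(A^{(1)},…,A^{(N)}) = ½‖Z − Σ_{r=1}^R a_r^{(1)} ∘ ⋯ ∘ a_r^{(N)}‖² with respect to A^{(n)} equals G^{(n)} = −Z_{(n)} Φ^{(n)} + A^{(n)} Γ^{(n)}, where Φ^{(n)} = A^{(N)} ⊙ ⋯ ⊙ A^{(n+1)} ⊙ A^{(n-1)} ⊙ ⋯ ⊙ A^{(1)} and Γ^{(n)} = ∗_{m≠n} (A^{(m)})^T A^{(m)}. -/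
open Matrix BigOperators

attribute [local instance] Matrix.normedAddCommGroup Matrix.normedSpace

noncomputable section

/-- The mode-`n` matricization of a tensor: rows are indexed by the mode-`n`
index and columns by the tuples of remaining indices (mode-`n` fibers). -/
def matricize {N : ℕ} {I : Fin N → ℕ} (n : Fin N) (T : (∀ m, Fin (I m)) → ℝ) :
    Matrix (Fin (I n)) (∀ m : {m : Fin N // m ≠ n}, Fin (I m.1)) ℝ :=
  Matrix.of fun i c =>
    T fun m => if h : m = n then Fin.cast (congrArg I h).symm i else c ⟨m, h⟩

/-- The continuous linear functional `H ↦ ∑ᵢᵣ Gᵢᵣ Hᵢᵣ` on matrices, i.e. the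
Frobenius pairing with a fixed matrix `G`.  A map has gradient `G` iff its
Fréchet derivative is this functional. -/
def frobPairing {I R : ℕ} (G : Matrix (Fin I) (Fin R) ℝ) :
    Matrix (Fin I) (Fin R) ℝ →L[ℝ] ℝ :=
  LinearMap.toContinuousLinearMap
    { toFun := fun H => ∑ i, ∑ r, G i r * H i r
      map_add' := by
        intro x y
        simp [Matrix.add_apply, mul_add, Finset.sum_add_distrib]
      map_smul' := by
        intro c x
        simp [Matrix.smul_apply, Finset.mul_sum, mul_left_comm, smul_eq_mul] }

/-- The CP objective `f = ½‖Z − ⟦A⁽¹⁾,…,A⁽ᴺ⁾⟧‖²` (Frobenius norm). -/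
def cpObj {N R : ℕ} {I : Fin N → ℕ} (Z : (∀ k, Fin (I k)) → ℝ)
    (A : ∀ k, Matrix (Fin (I k)) (Fin R) ℝ) : ℝ :=
  (1 / 2) * ∑ i : ∀ k, Fin (I k), (Z i - ∑ r, ∏ k, A k (i k) r) ^ 2

/-- The Khatri-Rao product `Φ⁽ⁿ⁾` of the factor matrices of all modes other
than `n`, with rows indexed by tuples of the remaining indices. -/
def cpPhi {N R : ℕ} {I : Fin N → ℕ} (A : ∀ k, Matrix (Fin (I k)) (Fin R) ℝ)
    (n : Fin N) :
    Matrix (∀ m : {m : Fin N // m ≠ n}, Fin (I m.1)) (Fin R) ℝ :=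
  Matrix.of fun c r => ∏ m : {m : Fin N // m ≠ n}, A m.1 (c m) r

/-- The Hadamard product `Γ⁽ⁿ⁾` of the Gram matrices of the factor matrices of
all modes other than `n`. -/
def cpGamma {N R : ℕ} {I : Fin N → ℕ} (A : ∀ k, Matrix (Fin (I k)) (Fin R) ℝ)
    (n : Fin N) : Matrix (Fin R) (Fin R) ℝ :=
  Matrix.of fun p q => ∏ m ∈ Finset.univ.erase n, ((A m)ᵀ * A m) p q

/-- Auxiliary: the pairing `H ↦ ∑ r, H j r * v r`. -/
def entryPair {In R : ℕ} (j : Fin In) (v : Fin R → ℝ) :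
    Matrix (Fin In) (Fin R) ℝ →L[ℝ] ℝ :=
  LinearMap.toContinuousLinearMap
    { toFun := fun H => ∑ r, H j r * v r
      map_add' := by
        intro x y
        simp [Matrix.add_apply, add_mul, Finset.sum_add_distrib]
      map_smul' := by
        intro c x
        simp [Matrix.smul_apply, Finset.mul_sum, mul_assoc, smul_eq_mul] }

lemma entryPair_apply {In R : ℕ} (j : Fin In) (v : Fin R → ℝ)
    (H : Matrix (Fin In) (Fin R) ℝ) : entryPair j v H = ∑ r, H j r * v r := rfl

lemma frobPairing_apply {I R : ℕ} (G H : Matrix (Fin I) (Fin R) ℝ) :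
    frobPairing G H = ∑ i, ∑ r, G i r * H i r := rfl

/-- The gradient of the CP objective with respect to the mode-`n` factor
matrix is `G⁽ⁿ⁾ = −Z₍ₙ₎ Φ⁽ⁿ⁾ + A⁽ⁿ⁾ Γ⁽ⁿ⁾`: the Fréchet derivative of
`B ↦ f(A⁽¹⁾,…,B,…,A⁽ᴺ⁾)` at `A⁽ⁿ⁾` is the Frobenius pairing with `G⁽ⁿ⁾`. -/
theorem cp_gradient {N R : ℕ} (I : Fin N → ℕ) (Z : (∀ k, Fin (I k)) → ℝ)
    (A : ∀ k, Matrix (Fin (I k)) (Fin R) ℝ) (n : Fin N) :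
    HasFDerivAt (fun B => cpObj Z (Function.update A n B))
      (frobPairing (-(matricize n Z * cpPhi A n) + A n * cpGamma A n))
      (A n) := by
  classical
  set Q : (∀ k, Fin (I k)) → Fin R → ℝ :=
    fun i r => ∏ k ∈ Finset.univ.erase n, A k (i k) r with hQdef
  have hfun : (fun B => cpObj Z (Function.update A n B)) =
      fun B => (1/2 : ℝ) * ∑ i : ∀ k, Fin (I k),
        (Z i - entryPair (i n) (Q i) B) ^ 2 := by
    funext B
    unfold cpObj
    congr 1
    refine Finset.sum_congr rfl fun i _ => ?_
    rw [entryPair_apply]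
    congr 2
    refine Finset.sum_congr rfl fun r _ => ?_
    rw [← Finset.mul_prod_erase _ _ (Finset.mem_univ n), Function.update_self]
    congr 1
    refine Finset.prod_congr rfl fun k hk => ?_
    rw [Function.update_of_ne (Finset.ne_of_mem_erase hk)]
  rw [hfun]
  simp only [sq]
  have hderiv : HasFDerivAt
      (fun B => (1/2 : ℝ) * ∑ i : ∀ k, Fin (I k),
        (Z i - entryPair (i n) (Q i) B) * (Z i - entryPair (i n) (Q i) B))
      ((1/2 : ℝ) • ∑ i : ∀ k, Fin (I k),
        ((Z i - entryPair (i n) (Q i) (A n)) • (0 - entryPair (i n) (Q i)) +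
         (Z i - entryPair (i n) (Q i) (A n)) • (0 - entryPair (i n) (Q i)))) (A n) := by
    apply HasFDerivAt.const_mul
    apply HasFDerivAt.fun_sum
    intro i _
    exact ((hasFDerivAt_const (Z i) (A n)).sub
      ((entryPair (i n) (Q i)).hasFDerivAt)).mul
      ((hasFDerivAt_const (Z i) (A n)).sub
      ((entryPair (i n) (Q i)).hasFDerivAt))
  convert hderiv using 1
  -- equality of the two continuous linear maps
  ext H
  simp only [frobPairing_apply, ContinuousLinearMap.smul_apply,
    ContinuousLinearMap.coe_sum', Finset.sum_apply, ContinuousLinearMap.add_apply,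
    ContinuousLinearMap.sub_apply, ContinuousLinearMap.neg_apply,
    ContinuousLinearMap.zero_apply, entryPair_apply, smul_eq_mul, zero_sub]
  rw [Finset.mul_sum]
  have hterm : ∀ i : ∀ k, Fin (I k),
      (1/2 : ℝ) * ((Z i - ∑ r, A n (i n) r * Q i r) * -(∑ r, H (i n) r * Q i r) +
        (Z i - ∑ r, A n (i n) r * Q i r) * -(∑ r, H (i n) r * Q i r)) =
      ((∑ r, A n (i n) r * Q i r) - Z i) * ∑ r, H (i n) r * Q i r := by
    intro i; ring
  rw [Finset.sum_congr rfl fun i _ => hterm i]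
  set e := Equiv.piSplitAt n (fun k => Fin (I k)) with he
  have h1 : ∀ (j : Fin (I n)) (c : ∀ m : {m : Fin N // m ≠ n}, Fin (I m.1)),
      e.symm (j, c) n = j := by
    intro j c; simp [he, Equiv.piSplitAt]
  have h2 : ∀ (j : Fin (I n)) (c : ∀ m : {m : Fin N // m ≠ n}, Fin (I m.1))
      (m : {m : Fin N // m ≠ n}), e.symm (j, c) m.1 = c m := by
    intro j c m; simp [he, Equiv.piSplitAt, m.2]
  have hZ : ∀ (j : Fin (I n)) (c : ∀ m : {m : Fin N // m ≠ n}, Fin (I m.1)),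
      Z (e.symm (j, c)) = matricize n Z j c := by
    intro j c
    show Z _ = Z _
    congr 1
    funext m
    by_cases h : m = n
    · subst h
      simp [he, Equiv.piSplitAt]
    · simp [he, Equiv.piSplitAt, h]
  have hQ : ∀ (j : Fin (I n)) (c : ∀ m : {m : Fin N // m ≠ n}, Fin (I m.1))
      (r : Fin R), Q (e.symm (j, c)) r = cpPhi A n c r := by
    intro j c r
    show ∏ k ∈ Finset.univ.erase n, A k (e.symm (j, c) k) r = _
    rw [Finset.prod_subtype (p := fun m => m ≠ n) (Finset.univ.erase n)
      (fun x => by simp) (fun k => A k (e.symm (j, c) k) r)]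
    exact Finset.prod_congr rfl fun m _ => by rw [h2 j c m]
  have hGam : ∀ q r : Fin R, cpGamma A n q r =
      ∑ c : ∀ m : {m : Fin N // m ≠ n}, Fin (I m.1),
        cpPhi A n c q * cpPhi A n c r := by
    intro q r
    have : ∀ c : ∀ m : {m : Fin N // m ≠ n}, Fin (I m.1),
        cpPhi A n c q * cpPhi A n c r =
        ∏ m : {m : Fin N // m ≠ n}, A m.1 (c m) q * A m.1 (c m) r := by
      intro c
      simp only [cpPhi, Matrix.of_apply]
      rw [Finset.prod_mul_distrib]
    rw [Finset.sum_congr rfl fun c _ => this c]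
    rw [← Fintype.piFinset_univ,
      ← Finset.prod_univ_sum (fun m : {m : Fin N // m ≠ n} =>
          (Finset.univ : Finset (Fin (I m.1))))
        (fun m x => A m.1 x q * A m.1 x r)]
    show (∏ m ∈ Finset.univ.erase n, ((A m)ᵀ * A m) q r) = _
    rw [Finset.prod_subtype (p := fun m => m ≠ n) (Finset.univ.erase n)
      (fun x => by simp) (fun m => ((A m)ᵀ * A m) q r)]
    exact Finset.prod_congr rfl fun m _ => by
      simp [Matrix.mul_apply, Matrix.transpose_apply]
  have hG : ∀ (j : Fin (I n)) (r : Fin R),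
      (-(matricize n Z * cpPhi A n) + A n * cpGamma A n) j r =
      ∑ c : ∀ m : {m : Fin N // m ≠ n}, Fin (I m.1),
        ((∑ q, A n j q * cpPhi A n c q) - matricize n Z j c) * cpPhi A n c r := by
    intro j r
    simp only [Matrix.add_apply, Matrix.neg_apply, Matrix.mul_apply, sub_mul,
      Finset.sum_sub_distrib]
    have : ∑ q, A n j q * cpGamma A n q r =
        ∑ c : ∀ m : {m : Fin N // m ≠ n}, Fin (I m.1),
          (∑ q, A n j q * cpPhi A n c q) * cpPhi A n c r := by
      simp only [hGam, Finset.mul_sum, Finset.sum_mul]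
      rw [Finset.sum_comm]
      exact Finset.sum_congr rfl fun c _ => Finset.sum_congr rfl fun q _ => by ring
    rw [this]
    ring
  rw [← Equiv.sum_comp e.symm
    (fun i : ∀ k, Fin (I k) =>
      ((∑ r, A n (i n) r * Q i r) - Z i) * ∑ r, H (i n) r * Q i r),
    Fintype.sum_prod_type]
  simp only [h1, hQ, hZ]
  refine Finset.sum_congr rfl fun j _ => ?_
  have step : ∀ c : ∀ m : {m : Fin N // m ≠ n}, Fin (I m.1),
      ((∑ q, A n j q * cpPhi A n c q) - matricize n Z j c) *
        ∑ r, H j r * cpPhi A n c r =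
      ∑ r, ((∑ q, A n j q * cpPhi A n c q) - matricize n Z j c) *
        cpPhi A n c r * H j r := by
    intro c
    rw [Finset.mul_sum]
    exact Finset.sum_congr rfl fun r _ => by ring
  rw [Finset.sum_congr rfl fun c _ => step c, Finset.sum_comm]
  refine Finset.sum_congr rfl fun r _ => ?_
  rw [hG j r, Finset.sum_mul]


end
end
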